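/- Fix Θ ∈ (0,π]. Let θ₁, θ₂ ∈ [0,Θ] and φ₁, φ₂ ∈ [0,4π), and set U = R(θ₁,0,φ₁)·R(θ₂,0,φ₂). Then at least one of the following holds: (a) there exist φ_m, φ_z ∈ [0,4π), θ', θ'' ∈ [0,Θ], φ', φ'' ∈ [0,4π) such that U = R(Θ,0,φ_m)·R(θ',0,φ') and U = R(θ'',0,φ'')·R(0,0,φ_z); or (b) there exist φ_z, φ_m ∈ [0,4π), θ', θ'' ∈ [0,Θ], φ', φ'' ∈ [0,4π) such that U = R(0,0,φ_z)·R(θ',0,φ') and U = R(θ'',0,φ'')·R(Θ,0,φ_m). -/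

import Mathlib

set_option maxHeartbeats 1000000


open Real

/-- The SU(2) rotation by angle φ about the axis (sin θ cos ψ, sin θ sin ψ, cos θ). -/
noncomputable def Rot (θ ψ φ : ℝ) : Matrix (Fin 2) (Fin 2) ℂ :=
  !![(Real.cos (φ/2) : ℂ) - Complex.I * (Real.sin (φ/2) : ℂ) * (Real.cos θ : ℂ),
     -Complex.I * (Real.sin (φ/2) : ℂ) * (Real.sin θ : ℂ) * Complex.exp (-(Complex.I * (ψ : ℂ)));
     -Complex.I * (Real.sin (φ/2) : ℂ) * (Real.sin θ : ℂ) * Complex.exp (Complex.I * (ψ : ℂ)),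
     (Real.cos (φ/2) : ℂ) + Complex.I * (Real.sin (φ/2) : ℂ) * (Real.cos θ : ℂ)]

noncomputable def Qm (u0 u1 u2 u3 : ℝ) : Matrix (Fin 2) (Fin 2) ℂ :=
  !![(u0:ℂ) - Complex.I*(u3:ℂ), -(u2:ℂ) - Complex.I*(u1:ℂ);
     (u2:ℂ) - Complex.I*(u1:ℂ), (u0:ℂ) + Complex.I*(u3:ℂ)]

lemma Qm_congr {a b c d a' b' c' d' : ℝ} (h1 : a = a') (h2 : b = b') (h3 : c = c') (h4 : d = d') :
    Qm a b c d = Qm a' b' c' d' := by rw [h1, h2, h3, h4]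

lemma rot_eq_Qm (θ φ : ℝ) :
    Rot θ 0 φ = Qm (Real.cos (φ/2)) (Real.sin (φ/2) * Real.sin θ) 0 (Real.sin (φ/2) * Real.cos θ) := by
  unfold Rot Qm
  ext i j
  fin_cases i <;> fin_cases j <;> simp <;> push_cast <;> ring

lemma Qm_mul (p0 p1 p2 p3 q0 q1 q2 q3 : ℝ) :
    Qm p0 p1 p2 p3 * Qm q0 q1 q2 q3 =
    Qm (p0*q0 - p1*q1 - p2*q2 - p3*q3)
       (p0*q1 + p1*q0 + p2*q3 - p3*q2)
       (p0*q2 - p1*q3 + p2*q0 + p3*q1)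
       (p0*q3 + p1*q2 - p2*q1 + p3*q0) := by
  unfold Qm
  ext i j
  fin_cases i <;> fin_cases j <;>
    simp [Matrix.mul_apply, Fin.sum_univ_two] <;> push_cast
  · linear_combination ((p3:ℂ)*q3 + (p1:ℂ)*q1) * Complex.I_sq
  · linear_combination ((p3:ℂ)*q1 - (p1:ℂ)*q3) * Complex.I_sq
  · linear_combination ((p1:ℂ)*q3 - (p3:ℂ)*q1) * Complex.I_sq
  · linear_combination ((p1:ℂ)*q1 + (p3:ℂ)*q3) * Complex.I_sq

lemma rot_transpose (θ φ : ℝ) : Matrix.transpose (Rot θ 0 φ) = Rot θ 0 φ := by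
  unfold Rot
  ext i j
  fin_cases i <;> fin_cases j <;> simp

lemma exists_phi (x y : ℝ) (h : x^2 + y^2 = 1) :
    ∃ φ : ℝ, φ ∈ Set.Ico 0 (4*π) ∧ Real.cos (φ/2) = x ∧ Real.sin (φ/2) = y := by
  have hx1 : -1 ≤ x := by nlinarith [sq_nonneg y]
  have hx2 : x ≤ 1 := by nlinarith [sq_nonneg y]
  have hpi := Real.pi_pos
  rcases le_or_gt 0 y with hy | hy
  · refine ⟨2 * Real.arccos x, ⟨?_, ?_⟩, ?_, ?_⟩
    · have := Real.arccos_nonneg x; linarith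
    · have := Real.arccos_le_pi x; linarith
    · rw [show 2 * Real.arccos x / 2 = Real.arccos x by ring, Real.cos_arccos hx1 hx2]
    · rw [show 2 * Real.arccos x / 2 = Real.arccos x by ring, Real.sin_arccos,
        show 1 - x^2 = y^2 by nlinarith]
      exact Real.sqrt_sq hy
  · have hxlt : x < 1 := by nlinarith
    have harc : 0 < Real.arccos x := Real.arccos_pos.mpr hxlt
    have harc2 : Real.arccos x ≤ π := Real.arccos_le_pi x
    refine ⟨2 * (2*π - Real.arccos x), ⟨by linarith, by linarith⟩, ?_, ?_⟩
    · rw [show 2 * (2*π - Real.arccos x) / 2 = 2*π - Real.arccos x by ring,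
        Real.cos_sub, Real.cos_two_pi, Real.sin_two_pi, Real.cos_arccos hx1 hx2]
      ring
    · rw [show 2 * (2*π - Real.arccos x) / 2 = 2*π - Real.arccos x by ring,
        Real.sin_sub, Real.cos_two_pi, Real.sin_two_pi, Real.sin_arccos,
        show 1 - x^2 = y^2 by nlinarith]
      rw [Real.sqrt_sq_eq_abs, abs_of_neg hy]; ring

lemma rot_zero (θ : ℝ) : Rot θ 0 0 = Qm 1 0 0 0 := by
  rw [rot_eq_Qm]
  exact Qm_congr (by norm_num) (by norm_num) rfl (by norm_num)

lemma rot_pi_conj (μ θ φ : ℝ) : Rot μ 0 π * Rot θ 0 φ = Rot (2*μ - θ) 0 φ * Rot μ 0 π := by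
  have key1 : Real.cos (2*μ-θ) * Real.cos μ + Real.sin (2*μ-θ) * Real.sin μ
      = Real.cos θ * Real.cos μ + Real.sin θ * Real.sin μ := by
    rw [← Real.cos_sub, ← Real.cos_sub, show 2*μ-θ-μ = -(θ-μ) by ring, Real.cos_neg]
  have key2 : Real.sin μ * Real.cos (2*μ-θ) - Real.cos μ * Real.sin (2*μ-θ)
      = Real.sin θ * Real.cos μ - Real.cos θ * Real.sin μ := by
    rw [← Real.sin_sub, ← Real.sin_sub]
    congr 1; ring
  rw [rot_eq_Qm μ π, rot_eq_Qm θ φ, rot_eq_Qm (2*μ-θ) φ,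
    show (π:ℝ)/2 = π/2 from rfl, Real.cos_pi_div_two, Real.sin_pi_div_two,
    Qm_mul, Qm_mul]
  apply Qm_congr
  · linear_combination (Real.sin (φ/2)) * key1
  · ring
  · linear_combination (-Real.sin (φ/2)) * key2
  · ring

lemma Qm_neg_one : Qm (-1) 0 0 0 = -1 := by
  unfold Qm
  ext i j
  fin_cases i <;> fin_cases j <;>
    simp [Matrix.one_apply, Matrix.neg_apply]

lemma W_sq (Θ : ℝ) : Rot (Θ/2) 0 π * Rot (Θ/2) 0 π = -1 := by
  rw [rot_eq_Qm, Real.cos_pi_div_two, Real.sin_pi_div_two, Qm_mul, ← Qm_neg_one]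
  apply Qm_congr
  · have := Real.sin_sq_add_cos_sq (Θ/2); linear_combination -this
  · ring
  · ring
  · ring

lemma quad_nonneg (A B X Y C : ℝ) (hX : 0 ≤ X) (hY : 0 ≤ Y) (h : C^2 ≤ X*Y) :
    0 ≤ A^2*X + B^2*Y + 2*A*B*C := by
  rcases eq_or_lt_of_le hX with hX0 | hX0
  · have hC : C = 0 := by nlinarith
    rw [hC, ← hX0]; nlinarith [sq_nonneg B]
  · nlinarith [sq_nonneg (A*X + B*C), sq_nonneg B, mul_pos hX0 hX0]

lemma aux_le (N q3 r : ℝ) (hr : 0 < r) (hrsq : r^2 = N^2 + q3^2) : q3 ≤ r ∧ -r ≤ q3 := by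
  constructor <;> nlinarith [sq_nonneg N, sq_nonneg (q3 - r), sq_nonneg (q3 + r)]

lemma aux1 (cT sT N q3 r : ℝ) (hsT : 0 ≤ sT) (pyT : sT^2 + cT^2 = 1) (hN : 0 < N)
    (hr : 0 < r) (hrsq : r^2 = N^2 + q3^2) (hP' : N*cT ≤ q3*sT) : cT*r ≤ q3 := by
  rcases le_or_gt cT 0 with hcT0 | hcT0
  · rcases le_or_gt 0 q3 with hq30 | hq30
    · nlinarith [mul_nonneg (neg_nonneg.2 hcT0) hr.le]
    · have hq3sT : q3*sT ≤ 0 := by nlinarith [mul_nonneg (neg_nonneg.2 hq30.le) hsT]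
      have hsq : (q3*sT)^2 ≤ (N*cT)^2 := by
        nlinarith [mul_nonneg (sub_nonneg.2 hP') (by linarith : 0 ≤ -(q3*sT + N*cT))]
      have hsq' : q3^2*sT^2 ≤ N^2*cT^2 := by nlinarith [hsq]
      have h3 : q3^2 ≤ cT^2*r^2 := by
        have e1 : cT^2*r^2 = cT^2*N^2 + cT^2*q3^2 := by rw [hrsq]; ring
        have e2 : q3^2*sT^2 + q3^2*cT^2 = q3^2 := by linear_combination q3^2 * pyT
        nlinarith [hsq']
      nlinarith [h3, mul_nonneg (neg_nonneg.2 hcT0) hr.le, sq_nonneg (cT*r + q3),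
        sq_nonneg (cT*r - q3)]
  · have hsTpos : 0 < sT := by
      rcases lt_or_eq_of_le hsT with h | h
      · exact h
      · exfalso; rw [← h] at hP'; nlinarith [mul_pos hN hcT0]
    have hq3pos : 0 < q3 := by nlinarith [hP', mul_pos hN hcT0, hsTpos]
    have hh : (N*cT)^2 ≤ (q3*sT)^2 := by nlinarith [hP', mul_pos hN hcT0]
    have h2 : N^2 + q3^2 ≤ (q3/cT)^2 := by
      rw [div_pow, le_div_iff₀ (pow_pos hcT0 2)]
      nlinarith [hh, pyT]
    have h3 : r ≤ q3/cT := by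
      have : r = Real.sqrt (N^2 + q3^2) := by
        rw [← hrsq, Real.sqrt_sq hr.le]
      rw [this]
      calc Real.sqrt (N^2 + q3^2) ≤ Real.sqrt ((q3/cT)^2) := Real.sqrt_le_sqrt h2
        _ = q3/cT := Real.sqrt_sq (by positivity)
    calc cT*r ≤ cT*(q3/cT) := mul_le_mul_of_nonneg_left h3 hcT0.le
      _ = q3 := by field_simp


lemma key (Θ : ℝ) (hΘ : Θ ∈ Set.Ioc 0 π) (a b : ℝ)
    (ha : a ∈ Set.Icc 0 Θ) (hb : b ∈ Set.Icc 0 Θ) (hab : a ≤ b) (α β : ℝ) :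
    ∃ φz y t : ℝ, φz ∈ Set.Ico 0 (4*π) ∧ y ∈ Set.Icc 0 Θ ∧ t ∈ Set.Ico 0 (4*π) ∧
      Rot a 0 α * Rot b 0 β = Rot 0 0 φz * Rot y 0 t := by
  obtain ⟨hΘ0, hΘπ⟩ := hΘ
  obtain ⟨ha0, haΘ⟩ := ha
  obtain ⟨hb0, hbΘ⟩ := hb
  have hπ := Real.pi_pos
  set c1 := Real.cos (α/2) with hc1
  set s1 := Real.sin (α/2) with hs1
  set c2 := Real.cos (β/2) with hc2
  set s2 := Real.sin (β/2) with hs2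
  set sa := Real.sin a with hsa'
  set ca := Real.cos a with hca'
  set sb := Real.sin b with hsb'
  set cb := Real.cos b with hcb'
  set sT := Real.sin Θ with hsT'
  set cT := Real.cos Θ with hcT'
  have py1 : s1^2 + c1^2 = 1 := Real.sin_sq_add_cos_sq _
  have py2 : s2^2 + c2^2 = 1 := Real.sin_sq_add_cos_sq _
  have pya : sa^2 + ca^2 = 1 := Real.sin_sq_add_cos_sq _
  have pyb : sb^2 + cb^2 = 1 := Real.sin_sq_add_cos_sq _
  have pyT : sT^2 + cT^2 = 1 := Real.sin_sq_add_cos_sq _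
  set u0 : ℝ := c1*c2 - s1*sa*(s2*sb) - s1*ca*(s2*cb) with hu0
  set u1 : ℝ := c1*(s2*sb) + s1*sa*c2 with hu1
  set u2 : ℝ := -(s1*sa*(s2*cb)) + s1*ca*(s2*sb) with hu2
  set u3 : ℝ := c1*(s2*cb) + s1*ca*c2 with hu3
  have hU : Rot a 0 α * Rot b 0 β = Qm u0 u1 u2 u3 := by
    rw [rot_eq_Qm a α, rot_eq_Qm b β, Qm_mul]
    exact Qm_congr (by ring) (by ring) (by ring) (by ring)
  have norm1 : u0^2 + u1^2 + u2^2 + u3^2 = 1 := by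
    have e : u0^2+u1^2+u2^2+u3^2 = (c1^2 + s1^2*(sa^2+ca^2)) * (c2^2 + s2^2*(sb^2+cb^2)) := by
      rw [hu0, hu1, hu2, hu3]; ring
    rw [e, pya, pyb, mul_one, mul_one]
    linear_combination (s2^2 + c2^2)*py1 + py2
  -- nonnegativity of various sines
  have hsa : 0 ≤ sa := Real.sin_nonneg_of_nonneg_of_le_pi ha0 (by linarith)
  have hsb : 0 ≤ sb := Real.sin_nonneg_of_nonneg_of_le_pi hb0 (by linarith)
  have hsT : 0 ≤ sT := Real.sin_nonneg_of_nonneg_of_le_pi hΘ0.le hΘπ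
  have hS : 0 ≤ sb*ca - cb*sa := by
    have h := Real.sin_nonneg_of_nonneg_of_le_pi (sub_nonneg.2 hab) (by linarith : b - a ≤ π)
    rwa [Real.sin_sub] at h
  have hZb : 0 ≤ sT*cb - cT*sb := by
    have h := Real.sin_nonneg_of_nonneg_of_le_pi (sub_nonneg.2 hbΘ) (by linarith : Θ - b ≤ π)
    rwa [Real.sin_sub] at h
  have hZa : 0 ≤ sT*ca - cT*sa := by
    have h := Real.sin_nonneg_of_nonneg_of_le_pi (sub_nonneg.2 haΘ) (by linarith : Θ - a ≤ π)
    rwa [Real.sin_sub] at h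
  have hW : 0 ≤ sT*(cb*ca + sb*sa) - cT*(sb*ca - cb*sa) := by
    have h := Real.sin_nonneg_of_nonneg_of_le_pi
      (by linarith : (0:ℝ) ≤ Θ - (b - a)) (by linarith : Θ - (b - a) ≤ π)
    rwa [Real.sin_sub, Real.sin_sub, Real.cos_sub] at h
  -- the central inequality
  have idP : (u1*u3 - u0*u2)*sT - (u1^2+u2^2)*cT
      = (c1*s2)^2*(sb*(sT*cb - cT*sb)) + (c2*s1)^2*(sa*(sT*ca - cT*sa))
        + 2*(c1*s2)*(c2*s1)*(sa*(sT*cb - cT*sb))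
        + (s1*s2)^2*((sb*ca - cb*sa)*(sT*(cb*ca + sb*sa) - cT*(sb*ca - cb*sa))) := by
    rw [hu0, hu1, hu2, hu3]; ring
  clear_value c1 s1 c2 s2 sa ca sb cb sT cT u0 u1 u2 u3
  have hP : (u1^2 + u2^2)*cT ≤ (u1*u3 - u0*u2)*sT := by
    have hX : 0 ≤ sb*(sT*cb - cT*sb) := mul_nonneg hsb hZb
    have hY : 0 ≤ sa*(sT*ca - cT*sa) := mul_nonneg hsa hZa
    have hXY : (sa*(sT*cb - cT*sb))^2 ≤ (sb*(sT*cb - cT*sb))*(sa*(sT*ca - cT*sa)) := by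
      have id2 : (sb*(sT*cb - cT*sb))*(sa*(sT*ca - cT*sa)) - (sa*(sT*cb - cT*sb))^2
          = (sa*(sT*cb - cT*sb))*(sT*(sb*ca - cb*sa)) := by ring
      linarith [id2, mul_nonneg (mul_nonneg hsa hZb) (mul_nonneg hsT hS)]
    have hmain := quad_nonneg (c1*s2) (c2*s1) _ _ _ hX hY hXY
    have hT4 : 0 ≤ (s1*s2)^2*((sb*ca - cb*sa)*(sT*(cb*ca + sb*sa) - cT*(sb*ca - cb*sa))) :=
      mul_nonneg (sq_nonneg _) (mul_nonneg hS hW)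
    linarith [idP, hmain, hT4]
  clear idP hu0 hu1 hu2 hu3
  -- case split on N2
  rcases eq_or_lt_of_le (by positivity : (0:ℝ) ≤ u1^2 + u2^2) with hN2 | hN2
  · -- degenerate: u1 = u2 = 0
    have hu1z : u1 = 0 := by
      have h1 : u1^2 = 0 := by linarith [sq_nonneg u1, sq_nonneg u2]
      exact pow_eq_zero_iff (by norm_num) |>.mp h1
    have hu2z : u2 = 0 := by
      have h1 : u2^2 = 0 := by linarith [sq_nonneg u1, sq_nonneg u2]
      exact pow_eq_zero_iff (by norm_num) |>.mp h1
    obtain ⟨φz, hzr, hcz, hsz⟩ := exists_phi u0 u3 (by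
      rw [hu1z, hu2z] at norm1; linarith [norm1])
    refine ⟨φz, 0, 0, hzr, ⟨le_refl 0, hΘ0.le⟩, ⟨le_refl 0, by linarith⟩, ?_⟩
    rw [hU, rot_eq_Qm 0 φz, rot_zero, Qm_mul]
    rw [Real.sin_zero, Real.cos_zero]
    refine Qm_congr ?_ ?_ ?_ ?_
    · rw [hcz]; ring
    · rw [hu1z]; ring
    · rw [hu2z]; ring
    · rw [hsz]; ring
  · -- main case
    set N := Real.sqrt (u1^2 + u2^2) with hN'
    have hN : 0 < N := Real.sqrt_pos.2 hN2
    have hN0 : N ≠ 0 := ne_of_gt hN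
    have hNsq : N^2 = u1^2 + u2^2 := Real.sq_sqrt hN2.le
    clear_value N
    set c : ℝ := u1/N with hc
    set s : ℝ := u2/N with hs
    set q0 : ℝ := (u1*u0 + u2*u3)/N with hq0
    set q3 : ℝ := (u1*u3 - u2*u0)/N with hq3
    have hcN : c*N = u1 := by rw [hc]; field_simp
    have hsN : s*N = u2 := by rw [hs]; field_simp
    have hq0N : q0*N = u1*u0 + u2*u3 := by rw [hq0]; field_simp
    have hq3N : q3*N = u1*u3 - u2*u0 := by rw [hq3]; field_simp
    clear_value c s q0 q3
    have hcs : c^2 + s^2 = 1 := by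
      have h : (c^2 + s^2) * N^2 = 1 * N^2 := by
        linear_combination (c*N + u1)*hcN + (s*N + u2)*hsN - hNsq
      exact mul_right_cancel₀ (pow_ne_zero 2 hN0) h
    have hqsum : q0^2 + q3^2 = u0^2 + u3^2 := by
      have h : (q0^2 + q3^2) * N^2 = (u0^2 + u3^2) * N^2 := by
        linear_combination (q0*N + (u1*u0+u2*u3))*hq0N + (q3*N + (u1*u3-u2*u0))*hq3N
          - (u0^2+u3^2)*hNsq
      exact mul_right_cancel₀ (pow_ne_zero 2 hN0) h
    set r : ℝ := Real.sqrt (N^2 + q3^2) with hr'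
    have hr2pos : 0 < N^2 + q3^2 := by positivity
    have hr : 0 < r := Real.sqrt_pos.2 hr2pos
    have hrne : r ≠ 0 := ne_of_gt hr
    have hrsq : r^2 = N^2 + q3^2 := Real.sq_sqrt hr2pos.le
    clear_value r
    have hq0r : q0^2 + r^2 = 1 := by rw [hrsq]; linarith [hqsum, hNsq, norm1]
    obtain ⟨t, htr, hct, hst⟩ := exists_phi q0 r hq0r
    obtain ⟨φz, hzr, hcz, hsz⟩ := exists_phi c s hcs
    obtain ⟨hq3le, hq3ge⟩ := aux_le N q3 r hr hrsq
    set y := Real.arccos (q3/r) with hy'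
    have hb1 : -1 ≤ q3/r := by rw [le_div_iff₀ hr]; linarith
    have hb2 : q3/r ≤ 1 := by rw [div_le_one hr]; linarith
    have hcy : Real.cos y = q3/r := Real.cos_arccos hb1 hb2
    have hsy : Real.sin y = N/r := by
      rw [hy', Real.sin_arccos, show 1 - (q3/r)^2 = (N/r)^2 by
        field_simp; linarith [hrsq]]
      exact Real.sqrt_sq (by positivity)
    have hy0 : 0 ≤ y := Real.arccos_nonneg _
    have hP' : N*cT ≤ q3*sT := by
      have h1 : N*(q3*sT) - N*(N*cT) = (u1*u3 - u0*u2)*sT - (u1^2+u2^2)*cT := by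
        linear_combination sT*hq3N - cT*hNsq
      have h2 : N*(N*cT) ≤ N*(q3*sT) := by linarith [hP]
      exact le_of_mul_le_mul_left h2 hN
    have hcTr : cT*r ≤ q3 := aux1 cT sT N q3 r hsT pyT hN hr hrsq hP'
    have hyΘ : y ≤ Θ := by
      by_contra h
      push_neg at h
      have hyπ : y ≤ π := Real.arccos_le_pi _
      have := Real.cos_lt_cos_of_nonneg_of_le_pi hΘ0.le hyπ h
      rw [hcy, ← hcT'] at this
      rw [div_lt_iff₀ hr] at this
      linarith
    refine ⟨φz, y, t, hzr, ⟨hy0, hyΘ⟩, htr, ?_⟩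
    rw [hU, rot_eq_Qm 0 φz, rot_eq_Qm y t, Real.sin_zero, Real.cos_zero,
      hcz, hsz, hct, hst, hcy, hsy, Qm_mul]
    have hr3 : r*(q3/r) = q3 := by field_simp
    have hr1 : r*(N/r) = N := by field_simp
    refine Qm_congr ?_ ?_ ?_ ?_ <;> simp only [hr3, hr1] <;>
      refine mul_right_cancel₀ (pow_ne_zero 2 hN0) ?_
    · linear_combination -(q0*N)*hcN - u1*hq0N + (q3*N)*hsN + u2*hq3N + u0*hNsq
    · linear_combination (-N^2)*hcN
    · linear_combination (-N^2)*hsN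
    · linear_combination -(q3*N)*hcN - u1*hq3N - (q0*N)*hsN - u2*hq0N + u3*hNsq


lemma keyTheta (Θ : ℝ) (hΘ : Θ ∈ Set.Ioc 0 π) (a b : ℝ)
    (ha : a ∈ Set.Icc 0 Θ) (hb : b ∈ Set.Icc 0 Θ) (hab : a ≤ b) (α β : ℝ) :
    ∃ φm y t : ℝ, φm ∈ Set.Ico 0 (4*π) ∧ y ∈ Set.Icc 0 Θ ∧ t ∈ Set.Ico 0 (4*π) ∧
      Rot b 0 β * Rot a 0 α = Rot Θ 0 φm * Rot y 0 t := by
  obtain ⟨φz, y, t, hzr, hy, htr, hEq⟩ := key Θ hΘ (Θ-b) (Θ-a)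
    ⟨by linarith [hb.2], by linarith [hb.1]⟩ ⟨by linarith [ha.2], by linarith [ha.1]⟩
    (by linarith) β α
  refine ⟨φz, Θ-y, t, hzr, ⟨by linarith [hy.2], by linarith [hy.1]⟩, htr, ?_⟩
  have hconj : ∀ θ φ : ℝ, Rot (Θ/2) 0 π * Rot θ 0 φ = Rot (Θ-θ) 0 φ * Rot (Θ/2) 0 π := by
    intro θ φ
    have h := rot_pi_conj (Θ/2) θ φ
    rwa [show 2*(Θ/2)-θ = Θ-θ by ring] at h
  have hW2 := W_sq Θ
  have cancel : ∀ X Y : Matrix (Fin 2) (Fin 2) ℂ,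
      Rot (Θ/2) 0 π * X = Rot (Θ/2) 0 π * Y → X = Y := by
    intro X Y h
    have h2 := congrArg (fun M => Rot (Θ/2) 0 π * M) h
    rw [← mul_assoc, ← mul_assoc, hW2, neg_one_mul, neg_one_mul] at h2
    exact neg_injective h2
  have hconjT : Rot (Θ/2) 0 π * Rot Θ 0 φz = Rot 0 0 φz * Rot (Θ/2) 0 π := by
    have h := hconj Θ φz; rwa [sub_self] at h
  have hconjz : Rot (Θ/2) 0 π * Rot (Θ-y) 0 t = Rot (Θ-(Θ-y)) 0 t * Rot (Θ/2) 0 π := hconj _ _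
  rw [show Θ-(Θ-y) = y by ring] at hconjz
  apply cancel
  calc Rot (Θ/2) 0 π * (Rot b 0 β * Rot a 0 α)
      = (Rot (Θ/2) 0 π * Rot b 0 β) * Rot a 0 α := (mul_assoc _ _ _).symm
    _ = (Rot (Θ-b) 0 β * Rot (Θ/2) 0 π) * Rot a 0 α := by rw [hconj]
    _ = Rot (Θ-b) 0 β * (Rot (Θ/2) 0 π * Rot a 0 α) := mul_assoc _ _ _
    _ = Rot (Θ-b) 0 β * (Rot (Θ-a) 0 α * Rot (Θ/2) 0 π) := by rw [hconj]
    _ = (Rot (Θ-b) 0 β * Rot (Θ-a) 0 α) * Rot (Θ/2) 0 π := (mul_assoc _ _ _).symm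
    _ = (Rot 0 0 φz * Rot y 0 t) * Rot (Θ/2) 0 π := by rw [hEq]
    _ = Rot 0 0 φz * (Rot y 0 t * Rot (Θ/2) 0 π) := mul_assoc _ _ _
    _ = Rot 0 0 φz * (Rot (Θ/2) 0 π * Rot (Θ-y) 0 t) := by rw [hconjz]
    _ = (Rot 0 0 φz * Rot (Θ/2) 0 π) * Rot (Θ-y) 0 t := (mul_assoc _ _ _).symm
    _ = (Rot (Θ/2) 0 π * Rot Θ 0 φz) * Rot (Θ-y) 0 t := by rw [hconjT]
    _ = Rot (Θ/2) 0 π * (Rot Θ 0 φz * Rot (Θ-y) 0 t) := mul_assoc _ _ _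

theorem stmt4 (Θ : ℝ) (hΘ : Θ ∈ Set.Ioc 0 π)
    (θ₁ θ₂ : ℝ) (h1 : θ₁ ∈ Set.Icc 0 Θ) (h2 : θ₂ ∈ Set.Icc 0 Θ)
    (φ₁ φ₂ : ℝ) (hφ1 : φ₁ ∈ Set.Ico 0 (4*π)) (hφ2 : φ₂ ∈ Set.Ico 0 (4*π)) :
    (∃ φm φz θ' θ'' φ' φ'' : ℝ,
      φm ∈ Set.Ico 0 (4*π) ∧ φz ∈ Set.Ico 0 (4*π) ∧
      θ' ∈ Set.Icc 0 Θ ∧ θ'' ∈ Set.Icc 0 Θ ∧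
      φ' ∈ Set.Ico 0 (4*π) ∧ φ'' ∈ Set.Ico 0 (4*π) ∧
      Rot θ₁ 0 φ₁ * Rot θ₂ 0 φ₂ = Rot Θ 0 φm * Rot θ' 0 φ' ∧
      Rot θ₁ 0 φ₁ * Rot θ₂ 0 φ₂ = Rot θ'' 0 φ'' * Rot 0 0 φz) ∨
    (∃ φz φm θ' θ'' φ' φ'' : ℝ,
      φz ∈ Set.Ico 0 (4*π) ∧ φm ∈ Set.Ico 0 (4*π) ∧
      θ' ∈ Set.Icc 0 Θ ∧ θ'' ∈ Set.Icc 0 Θ ∧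
      φ' ∈ Set.Ico 0 (4*π) ∧ φ'' ∈ Set.Ico 0 (4*π) ∧
      Rot θ₁ 0 φ₁ * Rot θ₂ 0 φ₂ = Rot 0 0 φz * Rot θ' 0 φ' ∧
      Rot θ₁ 0 φ₁ * Rot θ₂ 0 φ₂ = Rot θ'' 0 φ'' * Rot Θ 0 φm) := by
  rcases le_total θ₁ θ₂ with hle | hle
  · right
    obtain ⟨φz, y, t, hr1, hy1, ht1, he1⟩ := key Θ hΘ θ₁ θ₂ h1 h2 hle φ₁ φ₂
    obtain ⟨φm, y2, t2, hr2, hy2, ht2, he2⟩ := keyTheta Θ hΘ θ₁ θ₂ h1 h2 hle φ₁ φ₂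
    have he2' : Rot θ₁ 0 φ₁ * Rot θ₂ 0 φ₂ = Rot y2 0 t2 * Rot Θ 0 φm := by
      have h := congrArg Matrix.transpose he2
      rwa [Matrix.transpose_mul, Matrix.transpose_mul, rot_transpose, rot_transpose,
        rot_transpose, rot_transpose] at h
    exact ⟨φz, φm, y, y2, t, t2, hr1, hr2, hy1, hy2, ht1, ht2, he1, he2'⟩
  · left
    obtain ⟨φm, y, t, hr1, hy1, ht1, he1⟩ := keyTheta Θ hΘ θ₂ θ₁ h2 h1 hle φ₂ φ₁
    obtain ⟨φz, y2, t2, hr2, hy2, ht2, he2⟩ := key Θ hΘ θ₂ θ₁ h2 h1 hle φ₂ φ₁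
    have he2' : Rot θ₁ 0 φ₁ * Rot θ₂ 0 φ₂ = Rot y2 0 t2 * Rot 0 0 φz := by
      have h := congrArg Matrix.transpose he2
      rwa [Matrix.transpose_mul, Matrix.transpose_mul, rot_transpose, rot_transpose,
        rot_transpose, rot_transpose] at h
    exact ⟨φm, φz, y, y2, t, t2, hr1, hr2, hy1, hy2, ht1, ht2, he1, he2'⟩
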